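/- In the setting of the extended BRST complex, at total ghost number zero the cohomology decomposes as H⁰(Ω_ext) ≅ [ker(Ω|_{S⁰}) ⊗ (S̃ᵐ/Ω̃(S̃^{m-1}))] ⊕ [(Sᵐ/Ω(S^{m-1})) ⊗ ker(Ω̃|_{S̃⁰})], provided the differentials are compatible with the ghost-degree decomposition, Ω vanishes on Sᵐ, and Ω̃ vanishes on S̃ᵐ. -/

import Mathlib

open Complex Finset
open scoped TensorProduct

noncomputable section

variable {m : ℕ} {H : Type*} [NormedAddCommGroup H] [InnerProductSpace ℂ H]

/-- BRST states: `H`-valued coefficients indexed by increasing multi-indices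
(subsets of `{1,…,m}`), i.e. `S = H ⊗ Λ[η¹,…,ηᵐ]`. -/
abbrev States (m : ℕ) (H : Type*) := Finset (Fin m) → H

/-- Sign `(-1)^{#inversions}` arising when multiplying sorted monomials `η^s · η^t`. -/
def gSign {m : ℕ} (s t : Finset (Fin m)) : ℂ :=
  (-1) ^ (((s ×ˢ t).filter (fun p => p.2 < p.1)).card)

/-- Multiplication in the exterior (Grassmann) algebra `Λ[η¹,…,ηᵐ]`,
modeled on coefficient functions. -/
def grassMul {m : ℕ} (x y : States m ℂ) : States m ℂ :=
  fun u => ∑ s ∈ u.powerset, gSign s (u \ s) * x s * y (u \ s)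

/-- The monomial `η^A` for an increasing multi-index `A`. -/
def etaMono {m : ℕ} (A : Finset (Fin m)) : States m ℂ := fun u => if u = A then 1 else 0

/-- Conjugation on `Λ[η¹,…,ηᵐ]`: fixes each generator, reverses products
(hence the sign `(-1)^{r(r-1)/2}` on a degree-`r` monomial), conjugates scalars. -/
def grassStar {m : ℕ} (x : States m ℂ) : States m ℂ :=
  fun u => ((-1 : ℂ) ^ (u.card.choose 2)) * (starRingEnd ℂ) (x u)

/-- `top`: the coefficient of `η¹η²⋯ηᵐ`. -/
def grassTop {m : ℕ} (x : States m ℂ) : ℂ := x Finset.univ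

/-- The (degenerate) scalar product `(ψ,φ) = top { Σ_{I,J} ⟨ψ_I,φ_J⟩ (η^I)* η^J }`. -/
def scalarProd (ψ φ : States m H) : ℂ :=
  ∑ I : Finset (Fin m), ∑ J : Finset (Fin m),
    (inner ℂ (ψ I) (φ J) : ℂ) * grassTop (grassMul (grassStar (etaMono I)) (etaMono J))

/-- Ghost multiplication operator `η̂ᵃ` (left exterior multiplication by `ηᵃ`). -/
def etaOp (a : Fin m) (ψ : States m H) : States m H :=
  fun u => if a ∈ u then ((-1 : ℂ) ^ ((u.filter (fun b => b < a)).card)) • ψ (u.erase a) else 0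

/-- The left odd derivation `∂/∂ηᵃ` with `∂ηᵇ/∂ηᵃ = δᵇ_a`. -/
def derOp (a : Fin m) (ψ : States m H) : States m H :=
  fun u => if a ∈ u then 0 else ((-1 : ℂ) ^ ((u.filter (fun b => b < a)).card)) • ψ (insert a u)

/-- Ghost momentum operator `P̂_a = (1/i) ∂/∂ηᵃ`. -/
def POp (a : Fin m) (ψ : States m H) : States m H := Complex.I⁻¹ • derOp a ψ

/-- `ψ` is homogeneous of ghost degree `p`. -/
def homog (ψ : States m H) (p : ℕ) : Prop := ∀ u : Finset (Fin m), u.card ≠ p → ψ u = 0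

/-- `B` is a (two-sided) adjoint of `A` with respect to the scalar product. -/
def IsAdjointPair (A B : States m H → States m H) : Prop :=
  (∀ ψ φ : States m H, scalarProd (A ψ) φ = scalarProd ψ (B φ)) ∧
  (∀ ψ φ : States m H, scalarProd (B ψ) φ = scalarProd ψ (A φ))


noncomputable section BRSTAux

theorem brst_range_prodMap {R M M₂ M₃ M₄ : Type*} [Ring R]
    [AddCommGroup M] [Module R M] [AddCommGroup M₂] [Module R M₂]
    [AddCommGroup M₃] [Module R M₃] [AddCommGroup M₄] [Module R M₄]
    (f : M →ₗ[R] M₂) (g : M₃ →ₗ[R] M₄) :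
    LinearMap.range (f.prodMap g) = (LinearMap.range f).prod (LinearMap.range g) := by
  ext ⟨a, b⟩
  constructor
  · rintro ⟨⟨x, y⟩, h⟩
    simp only [LinearMap.prodMap_apply, Prod.mk.injEq] at h
    exact ⟨⟨x, h.1⟩, ⟨y, h.2⟩⟩
  · rintro ⟨⟨x, hx⟩, ⟨y, hy⟩⟩
    exact ⟨(x, y), by simp [hx, hy]⟩


/-- quotient of a product submodule by a product submodule splits. -/
def prodQuotEquiv {R M N : Type*} [Ring R] [AddCommGroup M] [Module R M]
    [AddCommGroup N] [Module R N] (p₁ q₁ : Submodule R M) (p₂ q₂ : Submodule R N) :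
    (↥(p₁.prod p₂) ⧸ (q₁.prod q₂).comap (p₁.prod p₂).subtype) ≃ₗ[R]
      (↥p₁ ⧸ q₁.comap p₁.subtype) × (↥p₂ ⧸ q₂.comap p₂.subtype) := by
  let f1 : ↥(p₁.prod p₂) →ₗ[R] ↥p₁ :=
    LinearMap.codRestrict p₁ ((LinearMap.fst R M N).comp (p₁.prod p₂).subtype)
      (fun x => x.2.1)
  let f2 : ↥(p₁.prod p₂) →ₗ[R] ↥p₂ :=
    LinearMap.codRestrict p₂ ((LinearMap.snd R M N).comp (p₁.prod p₂).subtype)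
      (fun x => x.2.2)
  let Φ : ↥(p₁.prod p₂) →ₗ[R] (↥p₁ ⧸ q₁.comap p₁.subtype) × (↥p₂ ⧸ q₂.comap p₂.subtype) :=
    ((q₁.comap p₁.subtype).mkQ.comp f1).prod ((q₂.comap p₂.subtype).mkQ.comp f2)
  have hsurj : Function.Surjective Φ := by
    rintro ⟨a, b⟩
    obtain ⟨x, rfl⟩ := Submodule.Quotient.mk_surjective _ a
    obtain ⟨y, rfl⟩ := Submodule.Quotient.mk_surjective _ b
    exact ⟨⟨(x.1, y.1), ⟨x.2, y.2⟩⟩, rfl⟩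
  have hker : LinearMap.ker Φ = (q₁.prod q₂).comap (p₁.prod p₂).subtype := by
    ext x
    simp [Φ, f1, f2, Prod.ext_iff, Submodule.Quotient.mk_eq_zero, Submodule.mem_prod]
    exact Iff.rfl
  exact (Submodule.quotEquivOfEq _ _ hker.symm) ≪≫ₗ Φ.quotKerEquivOfSurjective hsurj


variable {A B C1 C : Type*}
  [AddCommGroup A] [Module ℂ A] [AddCommGroup B] [Module ℂ B]
  [AddCommGroup C1] [Module ℂ C1] [AddCommGroup C] [Module ℂ C]

def compEquivR (f : A →ₗ[ℂ] B) (g : C1 →ₗ[ℂ] C) :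
    (↥(LinearMap.ker (LinearMap.rTensor C f)) ⧸
        (LinearMap.range (LinearMap.lTensor A g)).comap
          (LinearMap.ker (LinearMap.rTensor C f)).subtype)
      ≃ₗ[ℂ] (↥(LinearMap.ker f) ⊗[ℂ] (C ⧸ LinearMap.range g)) := by
  set ι := (LinearMap.ker f).subtype with hι
  have hinj : Function.Injective (LinearMap.rTensor C ι) :=
    Module.Flat.rTensor_preserves_injective_linearMap ι (Submodule.injective_subtype _)
  have hex : Function.Exact (LinearMap.rTensor C ι) (LinearMap.rTensor C f) :=
    Module.Flat.rTensor_exact C (LinearMap.exact_subtype_ker_map f)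
  have hker : LinearMap.ker (LinearMap.rTensor C f)
      = LinearMap.range (LinearMap.rTensor C ι) := LinearMap.exact_iff.mp hex
  let e1 : (↥(LinearMap.ker f) ⊗[ℂ] C) ≃ₗ[ℂ] ↥(LinearMap.ker (LinearMap.rTensor C f)) :=
    (LinearEquiv.ofInjective _ hinj) ≪≫ₗ LinearEquiv.ofEq _ _ hker.symm
  have he1 : ∀ x, ((e1 x : ↥(LinearMap.ker (LinearMap.rTensor C f))) : A ⊗[ℂ] C)
      = LinearMap.rTensor C ι x := fun x => rfl
  have hrex := ι.exists_leftInverse_of_injective (Submodule.ker_subtype _)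
  set r := hrex.choose with hrdef
  have hr : r ∘ₗ ι = LinearMap.id := hrex.choose_spec
  have h : (LinearMap.range (LinearMap.lTensor (↥(LinearMap.ker f)) g)).map e1.toLinearMap
      = (LinearMap.range (LinearMap.lTensor A g)).comap
          (LinearMap.ker (LinearMap.rTensor C f)).subtype := by
    ext z
    simp only [Submodule.mem_map, Submodule.mem_comap, LinearMap.mem_range,
      Submodule.coe_subtype, LinearEquiv.coe_coe]
    constructor
    · rintro ⟨x, ⟨y, rfl⟩, rfl⟩
      refine ⟨LinearMap.rTensor C1 ι y, ?_⟩
      rw [he1]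
      calc (LinearMap.lTensor A g) (LinearMap.rTensor C1 ι y)
          = TensorProduct.map ι g y := LinearMap.congr_fun (LinearMap.lTensor_comp_rTensor _ _ _) y
        _ = (LinearMap.rTensor C ι) ((LinearMap.lTensor _ g) y) :=
            (LinearMap.congr_fun (LinearMap.rTensor_comp_lTensor _ _ _) y).symm
    · rintro ⟨y, hy⟩
      refine ⟨LinearMap.lTensor _ g (LinearMap.rTensor C1 r y), ⟨_, rfl⟩, ?_⟩
      apply Subtype.ext
      rw [he1]
      obtain ⟨w, hw⟩ : (z : A ⊗[ℂ] C) ∈ LinearMap.range (LinearMap.rTensor C ι) :=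
        hker ▸ z.2
      have hcomp : (ι.comp r).comp ι = ι := by
        rw [LinearMap.comp_assoc, hr, LinearMap.comp_id]
      calc (LinearMap.rTensor C ι) ((LinearMap.lTensor _ g) ((LinearMap.rTensor C1 r) y))
          = TensorProduct.map ι g ((LinearMap.rTensor C1 r) y) :=
            LinearMap.congr_fun (LinearMap.rTensor_comp_lTensor _ _ _) _
        _ = TensorProduct.map (ι.comp r) g y :=
            LinearMap.congr_fun (LinearMap.map_comp_rTensor _ _ _ _) y
        _ = (LinearMap.rTensor C (ι.comp r)) ((LinearMap.lTensor A g) y) :=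
            (LinearMap.congr_fun (LinearMap.rTensor_comp_lTensor _ _ _) y).symm
        _ = (LinearMap.rTensor C (ι.comp r)) ((LinearMap.rTensor C ι) w) := by rw [hy, ← hw]
        _ = (LinearMap.rTensor C ι) w := by
            rw [← LinearMap.comp_apply, ← LinearMap.rTensor_comp, hcomp]
        _ = (z : A ⊗[ℂ] C) := hw
  have hp2 : LinearMap.range (LinearMap.lTensor (↥(LinearMap.ker f)) g)
      = LinearMap.range (TensorProduct.map (LinearMap.id : ↥(LinearMap.ker f) →ₗ[ℂ] _)
          (LinearMap.range g).subtype) := by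
    have hfac : LinearMap.lTensor (↥(LinearMap.ker f)) g
        = (TensorProduct.map LinearMap.id (LinearMap.range g).subtype).comp
            (LinearMap.lTensor _ g.rangeRestrict) := by
      show LinearMap.lTensor _ g
        = (LinearMap.lTensor _ (LinearMap.range g).subtype).comp (LinearMap.lTensor _ g.rangeRestrict)
      rw [← LinearMap.lTensor_comp]
      congr 1
    rw [hfac, LinearMap.range_comp, LinearMap.range_eq_top.mpr
      (LinearMap.lTensor_surjective _ g.surjective_rangeRestrict), Submodule.map_top]
  exact (Submodule.Quotient.equiv _ _ e1 h).symm ≪≫ₗ Submodule.quotEquivOfEq _ _ hp2 ≪≫ₗ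
    (TensorProduct.tensorQuotientEquiv (↥(LinearMap.ker f)) (LinearMap.range g)).symm

def compEquivL (f : A →ₗ[ℂ] B) (g : C1 →ₗ[ℂ] C) :
    (↥(LinearMap.ker (LinearMap.lTensor C f)) ⧸
        (LinearMap.range (LinearMap.rTensor A g)).comap
          (LinearMap.ker (LinearMap.lTensor C f)).subtype)
      ≃ₗ[ℂ] ((C ⧸ LinearMap.range g) ⊗[ℂ] ↥(LinearMap.ker f)) := by
  set ι := (LinearMap.ker f).subtype with hι
  have hinj : Function.Injective (LinearMap.lTensor C ι) :=
    Module.Flat.lTensor_preserves_injective_linearMap ι (Submodule.injective_subtype _)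
  have hex : Function.Exact (LinearMap.lTensor C ι) (LinearMap.lTensor C f) :=
    Module.Flat.lTensor_exact C (LinearMap.exact_subtype_ker_map f)
  have hker : LinearMap.ker (LinearMap.lTensor C f)
      = LinearMap.range (LinearMap.lTensor C ι) := LinearMap.exact_iff.mp hex
  let e1 : (C ⊗[ℂ] ↥(LinearMap.ker f)) ≃ₗ[ℂ] ↥(LinearMap.ker (LinearMap.lTensor C f)) :=
    (LinearEquiv.ofInjective _ hinj) ≪≫ₗ LinearEquiv.ofEq _ _ hker.symm
  have he1 : ∀ x, ((e1 x : ↥(LinearMap.ker (LinearMap.lTensor C f))) : C ⊗[ℂ] A)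
      = LinearMap.lTensor C ι x := fun x => rfl
  have hrex := ι.exists_leftInverse_of_injective (Submodule.ker_subtype _)
  set r := hrex.choose with hrdef
  have hr : r ∘ₗ ι = LinearMap.id := hrex.choose_spec
  have h : (LinearMap.range (LinearMap.rTensor (↥(LinearMap.ker f)) g)).map e1.toLinearMap
      = (LinearMap.range (LinearMap.rTensor A g)).comap
          (LinearMap.ker (LinearMap.lTensor C f)).subtype := by
    ext z
    simp only [Submodule.mem_map, Submodule.mem_comap, LinearMap.mem_range,
      Submodule.coe_subtype, LinearEquiv.coe_coe]
    constructor
    · rintro ⟨x, ⟨y, rfl⟩, rfl⟩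
      refine ⟨LinearMap.lTensor C1 ι y, ?_⟩
      rw [he1]
      calc (LinearMap.rTensor A g) (LinearMap.lTensor C1 ι y)
          = TensorProduct.map g ι y := LinearMap.congr_fun (LinearMap.rTensor_comp_lTensor _ _ _) y
        _ = (LinearMap.lTensor C ι) ((LinearMap.rTensor _ g) y) :=
            (LinearMap.congr_fun (LinearMap.lTensor_comp_rTensor _ _ _) y).symm
    · rintro ⟨y, hy⟩
      refine ⟨LinearMap.rTensor _ g (LinearMap.lTensor C1 r y), ⟨_, rfl⟩, ?_⟩
      apply Subtype.ext
      rw [he1]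
      obtain ⟨w, hw⟩ : (z : C ⊗[ℂ] A) ∈ LinearMap.range (LinearMap.lTensor C ι) :=
        hker ▸ z.2
      have hcomp : (ι.comp r).comp ι = ι := by
        rw [LinearMap.comp_assoc, hr, LinearMap.comp_id]
      calc (LinearMap.lTensor C ι) ((LinearMap.rTensor _ g) ((LinearMap.lTensor C1 r) y))
          = TensorProduct.map g ι ((LinearMap.lTensor C1 r) y) :=
            LinearMap.congr_fun (LinearMap.lTensor_comp_rTensor _ _ _) _
        _ = TensorProduct.map g (ι.comp r) y :=
            LinearMap.congr_fun (LinearMap.map_comp_lTensor _ _ _ _) y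
        _ = (LinearMap.lTensor C (ι.comp r)) ((LinearMap.rTensor A g) y) :=
            (LinearMap.congr_fun (LinearMap.lTensor_comp_rTensor _ _ _) y).symm
        _ = (LinearMap.lTensor C (ι.comp r)) ((LinearMap.lTensor C ι) w) := by rw [hy, ← hw]
        _ = (LinearMap.lTensor C ι) w := by
            rw [← LinearMap.comp_apply, ← LinearMap.lTensor_comp, hcomp]
        _ = (z : C ⊗[ℂ] A) := hw
  have hp2 : LinearMap.range (LinearMap.rTensor (↥(LinearMap.ker f)) g)
      = LinearMap.range (TensorProduct.map (LinearMap.range g).subtype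
          (LinearMap.id : ↥(LinearMap.ker f) →ₗ[ℂ] _)) := by
    have hfac : LinearMap.rTensor (↥(LinearMap.ker f)) g
        = (TensorProduct.map (LinearMap.range g).subtype LinearMap.id).comp
            (LinearMap.rTensor _ g.rangeRestrict) := by
      show LinearMap.rTensor _ g
        = (LinearMap.rTensor _ (LinearMap.range g).subtype).comp
            (LinearMap.rTensor _ g.rangeRestrict)
      rw [← LinearMap.rTensor_comp]
      congr 1
    rw [hfac, LinearMap.range_comp, LinearMap.range_eq_top.mpr
      (LinearMap.rTensor_surjective _ g.surjective_rangeRestrict), Submodule.map_top]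
  exact (Submodule.Quotient.equiv _ _ e1 h).symm ≪≫ₗ Submodule.quotEquivOfEq _ _ hp2 ≪≫ₗ
    (TensorProduct.quotientTensorEquiv (↥(LinearMap.ker f)) (LinearMap.range g)).symm

end BRSTAux

/-- at total ghost number zero (component `(S⁰ ⊗ S̃ᵐ) ⊕ (Sᵐ ⊗ S̃⁰)`,
with `Ω` vanishing on `Sᵐ` and `Ω̃` on `S̃ᵐ`, so the outgoing differential is
`D = (Ω ⊗ 1) ⊕ (1 ⊗ Ω̃)` and the incoming one is `E = (1 ⊗ Ω̃) ⊕ (Ω ⊗ 1)`),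
the BRST cohomology decomposes as
`H⁰(Ω_ext) ≅ [ker(Ω|_{S⁰}) ⊗ (S̃ᵐ/Ω̃(S̃^{m-1}))] ⊕ [(Sᵐ/Ω(S^{m-1})) ⊗ ker(Ω̃|_{S̃⁰})]`. -/
theorem ghost_zero_cohomology_decomposition
    (S0 S1 Sm1 Sm T0 T1 Tm1 Tm : Type*)
    [AddCommGroup S0] [Module ℂ S0] [AddCommGroup S1] [Module ℂ S1]
    [AddCommGroup Sm1] [Module ℂ Sm1] [AddCommGroup Sm] [Module ℂ Sm]
    [AddCommGroup T0] [Module ℂ T0] [AddCommGroup T1] [Module ℂ T1]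
    [AddCommGroup Tm1] [Module ℂ Tm1] [AddCommGroup Tm] [Module ℂ Tm]
    (Ω0 : S0 →ₗ[ℂ] S1) (Ωm1 : Sm1 →ₗ[ℂ] Sm)
    (Ω'0 : T0 →ₗ[ℂ] T1) (Ω'm1 : Tm1 →ₗ[ℂ] Tm)
    (D : (S0 ⊗[ℂ] Tm) × (Sm ⊗[ℂ] T0) →ₗ[ℂ] (S1 ⊗[ℂ] Tm) × (Sm ⊗[ℂ] T1))
    (hD : D = (LinearMap.rTensor Tm Ω0).prodMap (LinearMap.lTensor Sm Ω'0))
    (E : (S0 ⊗[ℂ] Tm1) × (Sm1 ⊗[ℂ] T0) →ₗ[ℂ] (S0 ⊗[ℂ] Tm) × (Sm ⊗[ℂ] T0))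
    (hE : E = (LinearMap.lTensor S0 Ω'm1).prodMap (LinearMap.rTensor T0 Ωm1)) :
    Nonempty
      ((↥(LinearMap.ker D) ⧸
          (LinearMap.range E).comap (LinearMap.ker D).subtype) ≃ₗ[ℂ]
        ((↥(LinearMap.ker Ω0) ⊗[ℂ] (Tm ⧸ LinearMap.range Ω'm1)) ×
          ((Sm ⧸ LinearMap.range Ωm1) ⊗[ℂ] ↥(LinearMap.ker Ω'0)))) := by
  subst hD hE
  rw [LinearMap.ker_prodMap, brst_range_prodMap]
  exact ⟨(prodQuotEquiv _ _ _ _) ≪≫ₗ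
    LinearEquiv.prodCongr (compEquivR Ω0 Ω'm1) (compEquivL Ω'0 Ωm1)⟩
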